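/- Let x, y be real numbers with y > x ≥ 0. Then the truncated tropical semiring 𝕋_{[x,y]} is isomorphic as a semiring to: 𝕋_{[0,1]} if x = 0; 𝕋_{[1,2]} if x > 0 and y ≤ 2x; 𝕋_{[1,2.5]} if x > 0 and 2x < y < 3x; and 𝕋_{[1,y/x]} if x > 0 and y ≥ 3x. Moreover the semirings 𝕋_{[0,1]}, 𝕋_{[1,2]}, 𝕋_{[1,2.5]} and 𝕋_{[1,y]} for real y ≥ 3 are pairwise non-isomorphic; in particular for 3 ≤ y < z, 𝕋_{[1,y]} and 𝕋_{[1,z]} are not isomorphic. -/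

import Mathlib

set_option maxHeartbeats 1000000

universe u

/-! ### Semiring classes.

A *semiring* here is a nonempty set with an associative commutative addition and an
associative multiplication which distributes over addition on both sides; no zero or
identity element is assumed. -/

class PlainSemiring (S : Type u) extends Add S, Mul S where
  nonempty' : Nonempty S
  add_assoc' : ∀ a b c : S, a + b + c = a + (b + c)
  add_comm' : ∀ a b : S, a + b = b + a
  mul_assoc' : ∀ a b c : S, a * b * c = a * (b * c)
  left_distrib' : ∀ a b c : S, a * (b + c) = a * b + a * c
  right_distrib' : ∀ a b c : S, (a + b) * c = a * c + b * c

/-- A bipotent semiring: `x + y` is always either `x` or `y`.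
(The induced total order is given by `x ≤ y ↔ x + y = y`.) -/
class BipotentSemiring (S : Type u) extends PlainSemiring S where
  bipotent : ∀ a b : S, a + b = a ∨ a + b = b

/-- A commutative bipotent semiring. -/
class CommBipotentSemiring (S : Type u) extends BipotentSemiring S where
  mul_comm' : ∀ a b : S, a * b = b * a

/-- `mpow a n` is the `(n+1)`-st power of `a`, so the set of positive powers of `a`
is exactly `Set.range (mpow a)`, and the multiplicative order of `a` is the
cardinality of `Set.range (mpow a)`. -/
def mpow {S : Type*} [Mul S] (a : S) : ℕ → S
  | 0 => a
  | n + 1 => mpow a n * a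

lemma mpow_mul_mpow {S : Type*} [PlainSemiring S] (a : S) (m n : ℕ) :
    mpow a m * mpow a n = mpow a (m + n + 1) := by
  induction n with
  | zero => rfl
  | succ n ih =>
    show mpow a m * (mpow a n * a) = mpow a (m + n + 1) * a
    rw [← PlainSemiring.mul_assoc', ih]

/-! ### Products of finite families, and permutability. -/

/-- Fold step used to define sums/products of possibly empty families in a structure
with no neutral element; the overall fold is `none` iff the family is empty. -/
def optStep {S : Type*} (op : S → S → S) : Option S → S → Option S :=
  fun acc x => some (acc.elim x (fun a => op a x))

/-- The sum `s 0 + s 1 + ⋯` of a finite family, as an `Option` (`none` iff `k = 0`). -/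
def finSum {S : Type*} [Add S] {k : ℕ} (s : Fin k → S) : Option S :=
  (List.ofFn s).foldl (optStep (· + ·)) none

/-- The product `s 0 * s 1 * ⋯` of a finite family, as an `Option` (`none` iff `k = 0`). -/
def finProd {S : Type*} [Mul S] {k : ℕ} (s : Fin k → S) : Option S :=
  (List.ofFn s).foldl (optStep (· * ·)) none

/-- A multiplicative structure is `k`-permutable if every product of `k` elements is
preserved by some non-identity permutation of its factors. -/
def KPermutable (S : Type*) [Mul S] (k : ℕ) : Prop :=
  ∀ s : Fin k → S, ∃ σ : Equiv.Perm (Fin k), σ ≠ Equiv.refl (Fin k) ∧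
    finProd (fun i => s (σ i)) = finProd s

/-- A semigroup is strongly permutable if it is `k`-permutable for some `k ≥ 2`. -/
def StronglyPermutable (S : Type*) [Mul S] : Prop :=
  ∃ k : ℕ, 2 ≤ k ∧ KPermutable S k

/-- A semigroup is weakly permutable if for some `k ≥ 2`, any product of `k` elements
is computed identically by two distinct permutations of its factors. -/
def WeaklyPermutable (S : Type*) [Mul S] : Prop :=
  ∃ k : ℕ, 2 ≤ k ∧ ∀ s : Fin k → S, ∃ σ τ : Equiv.Perm (Fin k), σ ≠ τ ∧
    finProd (fun i => s (σ i)) = finProd (fun i => s (τ i))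

/-- Isomorphism of semirings (bijection preserving addition and multiplication). -/
def RingLikeIso (S T : Type*) [Add S] [Mul S] [Add T] [Mul T] : Prop :=
  ∃ f : S → T, Function.Bijective f ∧ (∀ a b : S, f (a + b) = f a + f b) ∧
    (∀ a b : S, f (a * b) = f a * f b)

/-! ### Matrices. -/

/-- Square `n × n` matrices over `S`. -/
def MatSR (S : Type u) (n : ℕ) : Type u := Fin n → Fin n → S

/-- Matrix multiplication, `(A*B) i j = Σ_k (A i k * B k j)`.  (For `n ≥ 1` — the only
case of interest — the `getD` default value is never used.) -/
def matMul {S : Type*} [Add S] [Mul S] {n : ℕ} (A B : MatSR S n) : MatSR S n :=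
  fun i j => (finSum (fun k : Fin n => A i k * B k j)).getD (A i j * B i j)

/-- The multiplicative semigroup `M_n(S)`. -/
instance {S : Type*} [Add S] [Mul S] {n : ℕ} : Mul (MatSR S n) := ⟨matMul⟩

/-! ### `S⁰`: adjoining a zero, and upper triangular matrices. -/

/-- `S` with a zero (additively neutral, multiplicatively absorbing) element adjoined. -/
inductive Adj0 (S : Type u) : Type u
  | zero : Adj0 S
  | elem : S → Adj0 S

namespace Adj0

def add' {S : Type*} [Add S] : Adj0 S → Adj0 S → Adj0 S
  | .zero, b => b
  | .elem a, .zero => .elem a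
  | .elem a, .elem b => .elem (a + b)

def mul' {S : Type*} [Mul S] : Adj0 S → Adj0 S → Adj0 S
  | .zero, _ => .zero
  | .elem _, .zero => .zero
  | .elem a, .elem b => .elem (a * b)

instance {S : Type*} [Add S] : Add (Adj0 S) := ⟨add'⟩
instance {S : Type*} [Mul S] : Mul (Adj0 S) := ⟨mul'⟩

@[simp] lemma zero_add {S : Type*} [Add S] (b : Adj0 S) : (zero : Adj0 S) + b = b := rfl
@[simp] lemma add_zero {S : Type*} [Add S] (a : Adj0 S) : a + (zero : Adj0 S) = a := by
  cases a <;> rfl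
@[simp] lemma elem_add_elem {S : Type*} [Add S] (a b : S) :
    (elem a : Adj0 S) + elem b = elem (a + b) := rfl
@[simp] lemma zero_mul {S : Type*} [Mul S] (b : Adj0 S) : (zero : Adj0 S) * b = zero := rfl
@[simp] lemma mul_zero {S : Type*} [Mul S] (a : Adj0 S) : a * (zero : Adj0 S) = zero := by
  cases a <;> rfl
@[simp] lemma elem_mul_elem {S : Type*} [Mul S] (a b : S) :
    (elem a : Adj0 S) * elem b = elem (a * b) := rfl

lemma add_eq_zero_iff {S : Type*} [Add S] (a b : Adj0 S) :
    a + b = zero ↔ a = zero ∧ b = zero := by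
  cases a <;> cases b <;> simp

end Adj0

lemma foldl_optStep_adj0 {S : Type*} [Add S] (l : List (Adj0 S)) (a : Adj0 S) :
    ∃ c : Adj0 S, l.foldl (optStep (· + ·)) (some a) = some c ∧
      (c = Adj0.zero ↔ a = Adj0.zero ∧ ∀ x ∈ l, x = Adj0.zero) := by
  induction l generalizing a with
  | nil => exact ⟨a, rfl, by simp⟩
  | cons x l ih =>
    obtain ⟨c, hc, hiff⟩ := ih (a + x)
    refine ⟨c, ?_, ?_⟩
    · simpa [optStep] using hc
    · rw [hiff, Adj0.add_eq_zero_iff]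
      simp only [List.mem_cons, forall_eq_or_imp]
      tauto

lemma finSum_adj0_eq_zero {S : Type*} [Add S] {n : ℕ} (f : Fin n → Adj0 S) (i : Fin n)
    (d : Adj0 S) (h : ∀ k, f k = Adj0.zero) : (finSum f).getD d = Adj0.zero := by
  cases n with
  | zero => exact i.elim0
  | succ m =>
    rw [finSum, List.ofFn_succ, List.foldl_cons]
    obtain ⟨c, hc, hiff⟩ := foldl_optStep_adj0 (List.ofFn fun i : Fin m => f i.succ) (f 0)
    rw [show optStep (· + ·) none (f 0) = some (f 0) from rfl, hc]
    have : c = Adj0.zero := hiff.mpr ⟨h 0, by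
      intro x hx
      rw [List.mem_ofFn] at hx
      obtain ⟨j, rfl⟩ := hx
      exact h _⟩
    simp [this]

lemma finSum_adj0_ne_zero {S : Type*} [Add S] {n : ℕ} (f : Fin n → Adj0 S) (i : Fin n)
    (d : Adj0 S) (h : f i ≠ Adj0.zero) : (finSum f).getD d ≠ Adj0.zero := by
  cases n with
  | zero => exact i.elim0
  | succ m =>
    rw [finSum, List.ofFn_succ, List.foldl_cons]
    obtain ⟨c, hc, hiff⟩ := foldl_optStep_adj0 (List.ofFn fun i : Fin m => f i.succ) (f 0)
    rw [show optStep (· + ·) none (f 0) = some (f 0) from rfl, hc]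
    simp only [Option.getD_some]
    intro hcz
    obtain ⟨h0, hall⟩ := hiff.mp hcz
    induction i using Fin.cases with
    | zero => exact h h0
    | succ j => exact h (hall _ (List.mem_ofFn.mpr ⟨j, rfl⟩))

/-- Upper-triangularity over `S⁰`: entries strictly below the diagonal are the
adjoined zero; entries on and above the diagonal lie in `S`. -/
def IsUT {S : Type*} {n : ℕ} (A : MatSR (Adj0 S) n) : Prop :=
  (∀ i j : Fin n, (j : ℕ) < (i : ℕ) → A i j = Adj0.zero) ∧
  (∀ i j : Fin n, (i : ℕ) ≤ (j : ℕ) → ∃ s : S, A i j = Adj0.elem s)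

lemma IsUT.mul {S : Type*} [Add S] [Mul S] {n : ℕ} {A B : MatSR (Adj0 S) n}
    (hA : IsUT A) (hB : IsUT B) : IsUT (matMul A B) := by
  constructor
  · intro i j hji
    apply finSum_adj0_eq_zero _ i
    intro k
    rcases le_or_gt (i : ℕ) (k : ℕ) with h | h
    · rw [hB.1 k j (lt_of_lt_of_le hji h), Adj0.mul_zero]
    · rw [hA.1 i k h, Adj0.zero_mul]
  · intro i j hij
    have hne : matMul A B i j ≠ Adj0.zero := by
      apply finSum_adj0_ne_zero _ i
      obtain ⟨s, hs⟩ := hA.2 i i le_rfl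
      obtain ⟨t, ht⟩ := hB.2 i j hij
      rw [hs, ht, Adj0.elem_mul_elem]
      simp
    cases hc : matMul A B i j with
    | zero => exact absurd hc hne
    | elem s => exact ⟨s, rfl⟩

/-- The multiplicative semigroup `UT_n(S)` of upper triangular matrices over `S⁰`. -/
def UTMat (S : Type u) (n : ℕ) : Type u := {A : MatSR (Adj0 S) n // IsUT A}

instance {S : Type*} [Add S] [Mul S] {n : ℕ} : Mul (UTMat S n) :=
  ⟨fun A B => ⟨matMul A.1 B.1, A.2.mul B.2⟩⟩

/-! ### `S^{01}`: adjoining a zero and an identity, and unitriangular matrices. -/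

/-- `S` with a zero and a multiplicative identity adjoined (`S^{01}` in the paper).
The sum of `one` and an `elem` is left undefined in the paper; it is given an
arbitrary value here, and never arises in products of unitriangular matrices. -/
inductive Adj01 (S : Type u) : Type u
  | zero : Adj01 S
  | one : Adj01 S
  | elem : S → Adj01 S

namespace Adj01

def add' {S : Type*} [Add S] : Adj01 S → Adj01 S → Adj01 S
  | .zero, b => b
  | a, .zero => a
  | .one, .one => .one
  | .one, .elem b => .elem b
  | .elem a, .one => .elem a
  | .elem a, .elem b => .elem (a + b)

def mul' {S : Type*} [Mul S] : Adj01 S → Adj01 S → Adj01 S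
  | .zero, _ => .zero
  | _, .zero => .zero
  | .one, b => b
  | a, .one => a
  | .elem a, .elem b => .elem (a * b)

instance {S : Type*} [Add S] : Add (Adj01 S) := ⟨add'⟩
instance {S : Type*} [Mul S] : Mul (Adj01 S) := ⟨mul'⟩

@[simp] lemma zero_add {S : Type*} [Add S] (b : Adj01 S) : (zero : Adj01 S) + b = b := by
  cases b <;> rfl
@[simp] lemma add_zero {S : Type*} [Add S] (a : Adj01 S) : a + (zero : Adj01 S) = a := by
  cases a <;> rfl
@[simp] lemma one_add_one {S : Type*} [Add S] : (one : Adj01 S) + one = one := rfl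
@[simp] lemma elem_add_elem {S : Type*} [Add S] (a b : S) :
    (elem a : Adj01 S) + elem b = elem (a + b) := rfl
@[simp] lemma one_add_elem {S : Type*} [Add S] (b : S) :
    (one : Adj01 S) + elem b = elem b := rfl
@[simp] lemma elem_add_one {S : Type*} [Add S] (a : S) :
    (elem a : Adj01 S) + one = elem a := rfl
@[simp] lemma zero_mul {S : Type*} [Mul S] (b : Adj01 S) : (zero : Adj01 S) * b = zero := by
  cases b <;> rfl
@[simp] lemma mul_zero {S : Type*} [Mul S] (a : Adj01 S) : a * (zero : Adj01 S) = zero := by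
  cases a <;> rfl
@[simp] lemma one_mul {S : Type*} [Mul S] (b : Adj01 S) : (one : Adj01 S) * b = b := by
  cases b <;> rfl
@[simp] lemma mul_one {S : Type*} [Mul S] (a : Adj01 S) : a * (one : Adj01 S) = a := by
  cases a <;> rfl
@[simp] lemma elem_mul_elem {S : Type*} [Mul S] (a b : S) :
    (elem a : Adj01 S) * elem b = elem (a * b) := rfl

lemma mul_ne_one {S : Type*} [Mul S] {a b : Adj01 S} (ha : a ≠ one) (hb : b ≠ one) :
    a * b ≠ one := by
  cases a <;> cases b <;> simp_all

lemma add_ne_one {S : Type*} [Add S] {a b : Adj01 S} (ha : a ≠ one) (hb : b ≠ one) :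
    a + b ≠ one := by
  cases a <;> cases b <;> simp_all

lemma add_01 {S : Type*} [Add S] {a b : Adj01 S} (ha : a = zero ∨ a = one)
    (hb : b = zero ∨ b = one) :
    (a + b = zero ∨ a + b = one) ∧ (a + b = one ↔ a = one ∨ b = one) := by
  rcases ha with rfl | rfl <;> rcases hb with rfl | rfl <;> simp

end Adj01

lemma foldl_optStep_adj01 {S : Type*} [Add S] (l : List (Adj01 S)) (a : Adj01 S)
    (ha : a = Adj01.zero ∨ a = Adj01.one) (hl : ∀ x ∈ l, x = Adj01.zero ∨ x = Adj01.one) :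
    ∃ c : Adj01 S, l.foldl (optStep (· + ·)) (some a) = some c ∧
      (c = Adj01.zero ∨ c = Adj01.one) ∧
      (c = Adj01.one ↔ a = Adj01.one ∨ ∃ x ∈ l, x = Adj01.one) := by
  induction l generalizing a with
  | nil => exact ⟨a, rfl, ha, by simp⟩
  | cons x l ih =>
    have hx := hl x (by simp)
    have key := Adj01.add_01 ha hx
    obtain ⟨c, hc, hc01, hiff⟩ := ih (a + x) key.1 (fun y hy => hl y (by simp [hy]))
    refine ⟨c, by simpa [optStep] using hc, hc01, ?_⟩
    rw [hiff, key.2]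
    simp only [List.mem_cons, exists_eq_or_imp]
    tauto

lemma foldl_optStep_adj01_ne_one {S : Type*} [Add S] (l : List (Adj01 S)) (a : Adj01 S)
    (ha : a ≠ Adj01.one) (hl : ∀ x ∈ l, x ≠ Adj01.one) :
    ∃ c : Adj01 S, l.foldl (optStep (· + ·)) (some a) = some c ∧ c ≠ Adj01.one := by
  induction l generalizing a with
  | nil => exact ⟨a, rfl, ha⟩
  | cons x l ih =>
    have hax : a + x ≠ Adj01.one := Adj01.add_ne_one ha (hl x (by simp))
    obtain ⟨c, hc, hcne⟩ := ih (a + x) hax (fun y hy => hl y (by simp [hy]))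
    exact ⟨c, by simpa [optStep] using hc, hcne⟩

lemma finSum_adj01_eq_one {S : Type*} [Add S] {n : ℕ} (f : Fin n → Adj01 S) (i : Fin n)
    (d : Adj01 S) (h01 : ∀ k, f k = Adj01.zero ∨ f k = Adj01.one) (hi : f i = Adj01.one) :
    (finSum f).getD d = Adj01.one := by
  cases n with
  | zero => exact i.elim0
  | succ m =>
    rw [finSum, List.ofFn_succ, List.foldl_cons]
    obtain ⟨c, hc, _, hiff⟩ := foldl_optStep_adj01 (List.ofFn fun i : Fin m => f i.succ) (f 0)
      (h01 0) (by
        intro x hx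
        rw [List.mem_ofFn] at hx
        obtain ⟨j, rfl⟩ := hx
        exact h01 _)
    rw [show optStep (· + ·) none (f 0) = some (f 0) from rfl, hc]
    simp only [Option.getD_some]
    apply hiff.mpr
    induction i using Fin.cases with
    | zero => exact Or.inl hi
    | succ j => exact Or.inr ⟨f j.succ, List.mem_ofFn.mpr ⟨j, rfl⟩, hi⟩

lemma finSum_adj01_eq_zero {S : Type*} [Add S] {n : ℕ} (f : Fin n → Adj01 S) (i : Fin n)
    (d : Adj01 S) (h : ∀ k, f k = Adj01.zero) : (finSum f).getD d = Adj01.zero := by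
  cases n with
  | zero => exact i.elim0
  | succ m =>
    rw [finSum, List.ofFn_succ, List.foldl_cons]
    obtain ⟨c, hc, hc01, hiff⟩ := foldl_optStep_adj01 (List.ofFn fun i : Fin m => f i.succ)
      (f 0) (Or.inl (h 0)) (by
        intro x hx
        rw [List.mem_ofFn] at hx
        obtain ⟨j, rfl⟩ := hx
        exact Or.inl (h _))
    rw [show optStep (· + ·) none (f 0) = some (f 0) from rfl, hc]
    simp only [Option.getD_some]
    rcases hc01 with h' | h'
    · exact h'
    · exfalso
      rcases hiff.mp h' with h'' | ⟨x, hx, hx1⟩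
      · rw [h 0] at h''; cases h''
      · rw [List.mem_ofFn] at hx
        obtain ⟨j, rfl⟩ := hx
        rw [h _] at hx1; cases hx1

lemma finSum_adj01_ne_one {S : Type*} [Add S] {n : ℕ} (f : Fin n → Adj01 S) (i : Fin n)
    (d : Adj01 S) (h : ∀ k, f k ≠ Adj01.one) : (finSum f).getD d ≠ Adj01.one := by
  cases n with
  | zero => exact i.elim0
  | succ m =>
    rw [finSum, List.ofFn_succ, List.foldl_cons]
    obtain ⟨c, hc, hcne⟩ := foldl_optStep_adj01_ne_one (List.ofFn fun i : Fin m => f i.succ)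
      (f 0) (h 0) (by
        intro x hx
        rw [List.mem_ofFn] at hx
        obtain ⟨j, rfl⟩ := hx
        exact h _)
    rw [show optStep (· + ·) none (f 0) = some (f 0) from rfl, hc]
    simpa using hcne

/-- Unitriangularity over `S^{01}`: the adjoined zero strictly below the diagonal, the
adjoined identity on the diagonal, and entries of `S⁰` (i.e. anything except the
adjoined identity) strictly above the diagonal. -/
def IsU {S : Type*} {n : ℕ} (A : MatSR (Adj01 S) n) : Prop :=
  (∀ i j : Fin n, (j : ℕ) < (i : ℕ) → A i j = Adj01.zero) ∧
  (∀ i : Fin n, A i i = Adj01.one) ∧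
  (∀ i j : Fin n, (i : ℕ) < (j : ℕ) → A i j ≠ Adj01.one)

lemma IsU.mul {S : Type*} [Add S] [Mul S] {n : ℕ} {A B : MatSR (Adj01 S) n}
    (hA : IsU A) (hB : IsU B) : IsU (matMul A B) := by
  refine ⟨?_, ?_, ?_⟩
  · intro i j hji
    apply finSum_adj01_eq_zero _ i
    intro k
    rcases le_or_gt (i : ℕ) (k : ℕ) with h | h
    · rw [hB.1 k j (lt_of_lt_of_le hji h), Adj01.mul_zero]
    · rw [hA.1 i k h, Adj01.zero_mul]
  · intro i
    apply finSum_adj01_eq_one _ i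
    · intro k
      rcases lt_trichotomy (k : ℕ) (i : ℕ) with h | h | h
      · rw [hA.1 i k h, Adj01.zero_mul]; exact Or.inl rfl
      · have : k = i := Fin.ext h
        subst this
        rw [hA.2.1 k, hB.2.1 k, Adj01.one_mul]; exact Or.inr rfl
      · rw [hB.1 k i h, Adj01.mul_zero]; exact Or.inl rfl
    · rw [hA.2.1 i, hB.2.1 i, Adj01.one_mul]
  · intro i j hij
    apply finSum_adj01_ne_one _ i
    intro k
    rcases lt_trichotomy (k : ℕ) (i : ℕ) with h | h | h
    · rw [hA.1 i k h, Adj01.zero_mul]; exact fun h => by cases h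
    · have : k = i := Fin.ext h
      subst this
      rw [hA.2.1 k, Adj01.one_mul]
      exact hB.2.2 k j (by omega)
    · rcases lt_trichotomy (k : ℕ) (j : ℕ) with h' | h' | h'
      · exact Adj01.mul_ne_one (hA.2.2 i k h) (hB.2.2 k j h')
      · have : k = j := Fin.ext h'
        subst this
        rw [hB.2.1 k, Adj01.mul_one]
        exact hA.2.2 i k h
      · rw [hB.1 k j h', Adj01.mul_zero]; exact fun h => by cases h

/-- The multiplicative monoid `U_n(S)` of unitriangular matrices over `S^{01}`. -/
def UMat (S : Type u) (n : ℕ) : Type u := {A : MatSR (Adj01 S) n // IsU A}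

instance {S : Type*} [Add S] [Mul S] {n : ℕ} : Mul (UMat S n) :=
  ⟨fun A B => ⟨matMul A.1 B.1, A.2.mul B.2⟩⟩

/-! ### Monogenic subsemirings. -/

/-- The carrier of the monogenic subsemiring `⟨a⟩` generated by `a` is the set of
positive powers of `a`; in a bipotent semiring it is closed under addition. -/
instance genAdd {S : Type*} [BipotentSemiring S] (a : S) : Add ↥(Set.range (mpow a)) :=
  ⟨fun p q => ⟨p.1 + q.1, by
    rcases BipotentSemiring.bipotent p.1 q.1 with h | h <;> rw [h]
    exacts [p.2, q.2]⟩⟩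

instance genMul {S : Type*} [BipotentSemiring S] (a : S) : Mul ↥(Set.range (mpow a)) :=
  ⟨fun p q => ⟨p.1 * q.1, by
    obtain ⟨m, hm⟩ := p.2
    obtain ⟨n, hn⟩ := q.2
    exact ⟨m + n + 1, by rw [← hm, ← hn, mpow_mul_mpow]⟩⟩⟩

/-! ### Concrete bipotent semirings. -/

/-- The tropical semiring `ℕ_max` of positive natural numbers: addition is `max`,
multiplication is ordinary addition. -/
def NMax : Type := {n : ℕ // 0 < n}

instance : Add NMax := ⟨fun a b => ⟨max a.1 b.1, by have := a.2; have := b.2; omega⟩⟩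
instance : Mul NMax := ⟨fun a b => ⟨a.1 + b.1, by have := a.2; have := b.2; omega⟩⟩

/-- The tropical semiring `(-ℕ)_max` of negative integers: addition is `max`,
multiplication is ordinary addition. -/
def NegNMax : Type := {z : ℤ // z < 0}

instance : Add NegNMax := ⟨fun a b => ⟨max a.1 b.1, by have := a.2; have := b.2; omega⟩⟩
instance : Mul NegNMax := ⟨fun a b => ⟨a.1 + b.1, by have := a.2; have := b.2; omega⟩⟩

/-- The truncated tropical semiring `[k]_max` on `{1,…,k}`: addition is `max`,
multiplication is `a·b = min (a+b) k`. -/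
def KMax (k : ℕ) : Type := {n : ℕ // 0 < n ∧ n ≤ k}

instance {k : ℕ} : Add (KMax k) :=
  ⟨fun a b => ⟨max a.1 b.1, by have := a.2; have := b.2; omega⟩⟩
instance {k : ℕ} : Mul (KMax k) :=
  ⟨fun a b => ⟨min (a.1 + b.1) k, by have := a.2; have := b.2; omega⟩⟩

/-- The truncated tropical semiring `[-k]_max` on `{-k,…,-1}`: addition is `max`,
multiplication is `a·b = max (a+b) (-k)`. -/
def NegKMax (k : ℕ) : Type := {z : ℤ // -(k : ℤ) ≤ z ∧ z ≤ -1}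

instance {k : ℕ} : Add (NegKMax k) :=
  ⟨fun a b => ⟨max a.1 b.1, by have := a.2; have := b.2; omega⟩⟩
instance {k : ℕ} : Mul (NegKMax k) :=
  ⟨fun a b => ⟨max (a.1 + b.1) (-(k : ℤ)), by have := a.2; have := b.2; omega⟩⟩

/-- The two-element boolean semifield `𝔹`: `{0,1}` with `0 < 1`, addition `max` (= "or")
and the usual multiplication (= "and"). -/
def BoolSR : Type := Bool

instance : Add BoolSR := ⟨fun a b => (Bool.or a b : Bool)⟩
instance : Mul BoolSR := ⟨fun a b => (Bool.and a b : Bool)⟩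

/-- A chain semiring: a linearly ordered set with addition `max` and multiplication `min`. -/
def ChainSR (L : Type u) [LinearOrder L] : Type u := L

instance {L : Type u} [LinearOrder L] : Add (ChainSR L) := ⟨fun a b => (max a b : L)⟩
instance {L : Type u} [LinearOrder L] : Mul (ChainSR L) := ⟨fun a b => (min a b : L)⟩

/-- The three-element commutative bipotent semiring of Proposition 1: order `A < B < C`
(addition is `max`), every element multiplicatively idempotent, and all products of two
distinct elements equal to `B`. -/
inductive Three : Type
  | A : Three
  | B : Three
  | C : Three
deriving DecidableEq

instance : Fintype Three :=
  Fintype.ofList [Three.A, Three.B, Three.C] (by intro x; cases x <;> simp)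

def Three.add' : Three → Three → Three
  | .A, y => y
  | x, .A => x
  | .B, y => y
  | x, .B => x
  | .C, .C => .C

def Three.mul' : Three → Three → Three
  | .A, .A => .A
  | .B, .B => .B
  | .C, .C => .C
  | _, _ => .B

instance : Add Three := ⟨Three.add'⟩
instance : Mul Three := ⟨Three.mul'⟩

instance : CommBipotentSemiring Three where
  nonempty' := ⟨Three.A⟩
  add_assoc' := by decide
  add_comm' := by decide
  mul_assoc' := by decide
  left_distrib' := by decide
  right_distrib' := by decide
  bipotent := by decide
  mul_comm' := by decide

/-- A bundled (possibly zero-less and identity-less) semiring, used to quantify over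
semirings inside hypotheses. -/
structure BundledSemiring : Type 1 where
  carrier : Type
  add : carrier → carrier → carrier
  mul : carrier → carrier → carrier
  nonempty' : Nonempty carrier
  add_assoc' : ∀ a b c, add (add a b) c = add a (add b c)
  add_comm' : ∀ a b, add a b = add b a
  mul_assoc' : ∀ a b c, mul (mul a b) c = mul a (mul b c)
  left_distrib' : ∀ a b c, mul a (add b c) = add (mul a b) (mul a c)
  right_distrib' : ∀ a b c, mul (add a b) c = add (mul a c) (mul b c)

/-! ### Semifields. -/

/-- `z` is a zero element: additively neutral and multiplicatively absorbing. -/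
def IsZeroElem {S : Type*} [Add S] [Mul S] (z : S) : Prop :=
  ∀ x : S, z + x = x ∧ x + z = x ∧ z * x = z ∧ x * z = z

/-- `S` is a semifield: a commutative semiring, possibly without zero, whose set of
non-zero elements forms a group under multiplication (with identity `e`). -/
def IsSemifield (S : Type*) [Add S] [Mul S] : Prop :=
  ∃ e : S, ¬ IsZeroElem e ∧
    (∀ x : S, ¬ IsZeroElem x → e * x = x ∧ x * e = x) ∧
    (∀ x y : S, ¬ IsZeroElem x → ¬ IsZeroElem y → ¬ IsZeroElem (x * y)) ∧
    (∀ x : S, ¬ IsZeroElem x → ∃ y : S, ¬ IsZeroElem y ∧ x * y = e ∧ y * x = e)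

/-! ### Truncated tropical semirings. -/

/-- The underlying set `[x,y] ∪ {0}` of the truncated tropical semiring `𝕋_{[x,y]}`
(without the zero element `-∞`), for `0 ≤ x`.  Addition is `max`; multiplication is
`y`-truncated addition `a ⊗ b = min (a+b) y`, with the element `0` acting as the
multiplicative identity. -/
def TTb (x y : ℝ) (_hx : 0 ≤ x) : Type := {r : ℝ // r = 0 ∨ (x ≤ r ∧ r ≤ y)}

namespace TTb

protected def add {x y : ℝ} {hx : 0 ≤ x} (a b : TTb x y hx) : TTb x y hx :=
  ⟨max a.1 b.1, by rcases max_choice a.1 b.1 with h | h <;> rw [h]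
                   exacts [a.2, b.2]⟩

protected noncomputable def mul {x y : ℝ} {hx : 0 ≤ x} (a b : TTb x y hx) : TTb x y hx :=
  if ha : a.1 = 0 then b else if hb : b.1 = 0 then a else
    ⟨min (a.1 + b.1) y, by
      rcases a.2 with h | h
      · exact absurd h ha
      rcases b.2 with h' | h'
      · exact absurd h' hb
      right
      exact ⟨le_min (by linarith [h.1, h'.1]) (by linarith [h.1, h.2]), min_le_right _ _⟩⟩

instance {x y : ℝ} {hx : 0 ≤ x} : Add (TTb x y hx) := ⟨TTb.add⟩
noncomputable instance {x y : ℝ} {hx : 0 ≤ x} : Mul (TTb x y hx) := ⟨TTb.mul⟩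

end TTb

/-- The truncated tropical semiring `𝕋_{[x,y]}` (for `0 ≤ x < y`): the real interval
`[x,y]` together with a multiplicative identity `0` and a zero `-∞`, with addition
`max` and multiplication the `y`-truncated addition `a ⊗ b = min (a+b) y`. -/
abbrev TT (x y : ℝ) (hx : 0 ≤ x) : Type := Adj0 (TTb x y hx)

/-- The multiplicative identity `0` of `𝕋_{[x,y]}`. -/
noncomputable def ttId (x y : ℝ) (hx : 0 ≤ x) : TT x y hx := Adj0.elem ⟨0, Or.inl rfl⟩

lemma ttId_mul {x y : ℝ} {hx : 0 ≤ x} (b : TT x y hx) : ttId x y hx * b = b := by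
  cases b with
  | zero => rfl
  | elem e =>
    show Adj0.elem (TTb.mul ⟨0, Or.inl rfl⟩ e) = Adj0.elem e
    first | (unfold TTb.mul; rw [dif_pos rfl]) | simp [TTb.mul]

/-- The subsemigroup `S` of `M_2(𝕋_{[1,z]})` of matrices of the form `[[0,a],[-∞,b]]`. -/
noncomputable def UpperS (z : ℝ) (hz : (0:ℝ) ≤ 1) : Type :=
  {A : MatSR (TT 1 z hz) 2 // A 0 0 = ttId 1 z hz ∧ A 1 0 = Adj0.zero}

/-- The subsemigroup `S'` of `M_2(𝕋_{[1,z]})` of matrices of the form `[[0,-∞],[a,b]]`. -/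
noncomputable def LowerS (z : ℝ) (hz : (0:ℝ) ≤ 1) : Type :=
  {A : MatSR (TT 1 z hz) 2 // A 0 0 = ttId 1 z hz ∧ A 0 1 = Adj0.zero}

noncomputable instance {z : ℝ} {hz : (0:ℝ) ≤ 1} : Mul (UpperS z hz) :=
  ⟨fun A B => ⟨A.1 * B.1, by
    obtain ⟨hA1, hA2⟩ := A.2
    obtain ⟨hB1, hB2⟩ := B.2
    constructor
    · show A.1 0 0 * B.1 0 0 + A.1 0 1 * B.1 1 0 = ttId 1 z hz
      rw [hA1, hB1, hB2, ttId_mul, Adj0.mul_zero, Adj0.add_zero]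
    · show A.1 1 0 * B.1 0 0 + A.1 1 1 * B.1 1 0 = Adj0.zero
      rw [hA2, hB2, Adj0.zero_mul, Adj0.mul_zero, Adj0.add_zero]⟩⟩

noncomputable instance {z : ℝ} {hz : (0:ℝ) ≤ 1} : Mul (LowerS z hz) :=
  ⟨fun A B => ⟨A.1 * B.1, by
    obtain ⟨hA1, hA2⟩ := A.2
    obtain ⟨hB1, hB2⟩ := B.2
    constructor
    · show A.1 0 0 * B.1 0 0 + A.1 0 1 * B.1 1 0 = ttId 1 z hz
      rw [hA1, hB1, hA2, ttId_mul, Adj0.zero_mul, Adj0.add_zero]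
    · show A.1 0 0 * B.1 0 1 + A.1 0 1 * B.1 1 1 = Adj0.zero
      rw [hA1, hB2, hA2, ttId_mul, Adj0.zero_mul, Adj0.add_zero]⟩⟩

/-! ### Basic facts -/

lemma mul_ttId {x y : ℝ} {hx : 0 ≤ x} (a : TT x y hx) : a * ttId x y hx = a := by
  cases a with
  | zero => rfl
  | elem e =>
    show Adj0.elem (TTb.mul e ⟨0, Or.inl rfl⟩) = Adj0.elem e
    unfold TTb.mul
    by_cases he : e.1 = 0
    · erw [dif_pos he]
      congr 1
      exact Subtype.ext he.symm
    · erw [dif_neg he, dif_pos rfl]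

lemma iso_zero {x y x' y' : ℝ} {hx : 0 ≤ x} {hx' : 0 ≤ x'}
    (f : TT x y hx → TT x' y' hx') (hsurj : Function.Surjective f)
    (hadd : ∀ a b, f (a + b) = f a + f b) : f Adj0.zero = Adj0.zero := by
  have key : ∀ b, f Adj0.zero + b = b := by
    intro b
    obtain ⟨a, rfl⟩ := hsurj b
    rw [← hadd]
    rfl
  have := key Adj0.zero
  rwa [Adj0.add_zero] at this

lemma iso_id {x y x' y' : ℝ} {hx : 0 ≤ x} {hx' : 0 ≤ x'}
    (f : TT x y hx → TT x' y' hx') (hsurj : Function.Surjective f)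
    (hmul : ∀ a b, f (a * b) = f a * f b) : f (ttId x y hx) = ttId x' y' hx' := by
  have key : ∀ b, f (ttId x y hx) * b = b := by
    intro b
    obtain ⟨a, rfl⟩ := hsurj b
    rw [← hmul, ttId_mul]
  have := key (ttId x' y' hx')
  rwa [mul_ttId] at this

lemma elem_add_elem' {x y : ℝ} {hx : 0 ≤ x} (a b : TTb x y hx) :
    (Adj0.elem a * Adj0.elem b : TT x y hx) = Adj0.elem (TTb.mul a b) := rfl

noncomputable def ttVal {x y : ℝ} {hx : 0 ≤ x} : TT x y hx → ℝ
  | .zero => -1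
  | .elem s => s.1

lemma extract_phi {Y W : ℝ} (hY : 1 < Y) (hW : 1 < W)
    (h : RingLikeIso (TT 1 Y zero_le_one) (TT 1 W zero_le_one)) :
    ∃ φ : ℝ → ℝ,
      (∀ r, 1 ≤ r → r ≤ Y → 1 ≤ φ r ∧ φ r ≤ W) ∧
      (∀ r r', 1 ≤ r → r ≤ r' → r' ≤ Y → φ r ≤ φ r') ∧
      (∀ r r', 1 ≤ r → r ≤ Y → 1 ≤ r' → r' ≤ Y → φ r = φ r' → r = r') ∧
      (∀ s, 1 ≤ s → s ≤ W → ∃ r, (1 ≤ r ∧ r ≤ Y) ∧ φ r = s) ∧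
      φ 1 = 1 ∧ φ Y = W ∧
      (∀ r r', 1 ≤ r → r ≤ Y → 1 ≤ r' → r' ≤ Y →
        φ (min (r+r') Y) = min (φ r + φ r') W) := by
  obtain ⟨f, ⟨finj, fsurj⟩, hadd, hmul⟩ := h
  have fzero : f Adj0.zero = Adj0.zero := iso_zero f fsurj hadd
  have fid : f (ttId 1 Y zero_le_one) = ttId 1 W zero_le_one := iso_id f fsurj hmul
  -- the element of the source interval
  set el : ∀ r : ℝ, 1 ≤ r → r ≤ Y → TT 1 Y zero_le_one :=
    fun r h1 h2 => Adj0.elem ⟨r, Or.inr ⟨h1, h2⟩⟩ with hel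
  -- key extraction
  have hex : ∀ (r : ℝ) (h1 : 1 ≤ r) (h2 : r ≤ Y),
      ∃ s : TTb 1 W zero_le_one, f (el r h1 h2) = Adj0.elem s ∧ 1 ≤ s.1 ∧ s.1 ≤ W := by
    intro r h1 h2
    cases hfe : f (el r h1 h2) with
    | zero =>
      exfalso
      rw [← fzero] at hfe
      have := finj hfe
      simp only [hel] at this
      cases this
    | elem s =>
      refine ⟨s, rfl, ?_⟩
      rcases s.2 with hs0 | hs
      · exfalso
        have : Adj0.elem s = ttId 1 W zero_le_one := by
          rw [ttId]; congr 1; exact Subtype.ext hs0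
        rw [this, ← fid] at hfe
        have := finj hfe
        simp only [hel, ttId] at this
        injection this with h'
        have : r = 0 := congrArg Subtype.val h'
        linarith
      · exact hs
  classical
  set φ : ℝ → ℝ := fun r =>
    if hr : 1 ≤ r ∧ r ≤ Y then ttVal (f (Adj0.elem ⟨r, Or.inr hr⟩)) else r with hφ
  have hφval : ∀ (r : ℝ) (h1 : 1 ≤ r) (h2 : r ≤ Y),
      ∃ s : TTb 1 W zero_le_one, f (el r h1 h2) = Adj0.elem s ∧ s.1 = φ r
        ∧ 1 ≤ φ r ∧ φ r ≤ W := by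
    intro r h1 h2
    obtain ⟨s, hfe, hs1, hs2⟩ := hex r h1 h2
    refine ⟨s, hfe, ?_, ?_⟩
    · rw [hφ]
      simp only [dif_pos (And.intro h1 h2)]
      have : (Adj0.elem ⟨r, Or.inr ⟨h1, h2⟩⟩ : TT 1 Y zero_le_one)
          = Adj0.elem ⟨r, Or.inr ⟨h1, h2⟩⟩ := rfl
      rw [show f (Adj0.elem ⟨r, Or.inr ⟨h1, h2⟩⟩) = Adj0.elem s from hfe]
      rfl
    · constructor
      · rw [hφ]; simp only [dif_pos (And.intro h1 h2)]
        rw [show f (Adj0.elem ⟨r, Or.inr ⟨h1, h2⟩⟩) = Adj0.elem s from hfe]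
        exact hs1
      · rw [hφ]; simp only [dif_pos (And.intro h1 h2)]
        rw [show f (Adj0.elem ⟨r, Or.inr ⟨h1, h2⟩⟩) = Adj0.elem s from hfe]
        exact hs2
  have h1Y := hY.le
  -- bounds
  have hbound : ∀ r, 1 ≤ r → r ≤ Y → 1 ≤ φ r ∧ φ r ≤ W := by
    intro r h1 h2
    obtain ⟨s, _, _, hb1, hb2⟩ := hφval r h1 h2
    exact ⟨hb1, hb2⟩
  -- monotone
  have hmono : ∀ r r', 1 ≤ r → r ≤ r' → r' ≤ Y → φ r ≤ φ r' := by
    intro r r' h1 hrr h2'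
    have h1' : 1 ≤ r' := le_trans h1 hrr
    have h2 : r ≤ Y := le_trans hrr h2'
    obtain ⟨s, hfe, hsv, _, _⟩ := hφval r h1 h2
    obtain ⟨s', hfe', hsv', _, _⟩ := hφval r' h1' h2'
    have hsum : el r h1 h2 + el r' h1' h2' = el r' h1' h2' := by
      show Adj0.elem _ = Adj0.elem _
      congr 1
      apply Subtype.ext
      show max r r' = r'
      exact max_eq_right hrr
    have hkey := hadd (el r h1 h2) (el r' h1' h2')
    rw [hsum, hfe, hfe', Adj0.elem_add_elem] at hkey
    injection hkey with hv
    have hv' : s'.1 = max s.1 s'.1 := congrArg Subtype.val hv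
    rw [← hsv, ← hsv']
    calc s.1 ≤ max s.1 s'.1 := le_max_left _ _
      _ = s'.1 := hv'.symm
  -- injective
  have hinj : ∀ r r', 1 ≤ r → r ≤ Y → 1 ≤ r' → r' ≤ Y → φ r = φ r' → r = r' := by
    intro r r' h1 h2 h1' h2' heq
    obtain ⟨s, hfe, hsv, _, _⟩ := hφval r h1 h2
    obtain ⟨s', hfe', hsv', _, _⟩ := hφval r' h1' h2'
    have : s = s' := Subtype.ext (by rw [hsv, hsv', heq])
    rw [this, ← hfe'] at hfe
    have := finj hfe
    simp only [hel] at this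
    injection this with hv
    exact congrArg Subtype.val hv
  -- surjective
  have hsurjφ : ∀ s, 1 ≤ s → s ≤ W → ∃ r, (1 ≤ r ∧ r ≤ Y) ∧ φ r = s := by
    intro s hs1 hs2
    obtain ⟨a, ha⟩ := fsurj (Adj0.elem ⟨s, Or.inr ⟨hs1, hs2⟩⟩)
    cases a with
    | zero =>
      rw [fzero] at ha
      exact absurd ha (fun h => by cases h)
    | elem t =>
      rcases t.2 with ht0 | ⟨ht1, ht2⟩
      · exfalso
        have : (Adj0.elem t : TT 1 Y zero_le_one) = ttId 1 Y zero_le_one := by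
          rw [ttId]; congr 1; exact Subtype.ext ht0
        rw [this, fid, ttId] at ha
        injection ha with hv
        have : (0:ℝ) = s := congrArg Subtype.val hv
        linarith
      · refine ⟨t.1, ⟨ht1, ht2⟩, ?_⟩
        obtain ⟨s'', hfe, hsv, _, _⟩ := hφval t.1 ht1 ht2
        have hel_eq : el t.1 ht1 ht2 = Adj0.elem t :=
          congrArg Adj0.elem (Subtype.ext rfl)
        rw [hel_eq, ha] at hfe
        injection hfe with hv
        rw [← hsv]
        exact (congrArg Subtype.val hv).symm
  -- φ 1 = 1
  have hφ1 : φ 1 = 1 := by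
    obtain ⟨r, ⟨hr1, hr2⟩, hφr⟩ := hsurjφ 1 le_rfl hW.le
    have := hmono 1 r le_rfl hr1 hr2
    rw [hφr] at this
    exact le_antisymm this (hbound 1 le_rfl h1Y).1
  -- φ Y = W
  have hφY : φ Y = W := by
    obtain ⟨r, ⟨hr1, hr2⟩, hφr⟩ := hsurjφ W (by linarith) le_rfl
    have := hmono r Y hr1 hr2 le_rfl
    rw [hφr] at this
    exact le_antisymm (hbound Y (by linarith) le_rfl).2 this
  -- multiplicative compatibility
  have hcompat : ∀ r r', 1 ≤ r → r ≤ Y → 1 ≤ r' → r' ≤ Y →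
      φ (min (r+r') Y) = min (φ r + φ r') W := by
    intro r r' h1 h2 h1' h2'
    have h1m : 1 ≤ min (r+r') Y := le_min (by linarith) h1Y
    have h2m : min (r+r') Y ≤ Y := min_le_right _ _
    obtain ⟨s, hfe, hsv, hsb1, _⟩ := hφval r h1 h2
    obtain ⟨s', hfe', hsv', hsb1', _⟩ := hφval r' h1' h2'
    obtain ⟨t, hfet, hstv, _, _⟩ := hφval _ h1m h2m
    have hprod : el r h1 h2 * el r' h1' h2' = el (min (r+r') Y) h1m h2m := by
      show Adj0.elem _ = Adj0.elem _
      congr 1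
      apply Subtype.ext
      show (TTb.mul _ _).1 = min (r+r') Y
      unfold TTb.mul; erw [dif_neg (show (r:ℝ) ≠ 0 by intro h; rw [h] at h1; linarith),
        dif_neg (show (r':ℝ) ≠ 0 by intro h; rw [h] at h1'; linarith)]
    have hkey := hmul (el r h1 h2) (el r' h1' h2')
    rw [hprod, hfet, hfe, hfe', elem_add_elem'] at hkey
    injection hkey with hv
    have hv' : t.1 = (TTb.mul s s').1 := congrArg Subtype.val hv
    unfold TTb.mul at hv'
    erw [dif_neg (show s.1 ≠ 0 by intro h; linarith [h, hsv, hsb1]),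
      dif_neg (show s'.1 ≠ 0 by intro h; linarith [h, hsv', hsb1'])] at hv'
    rw [← hstv, hv']
    show (s.1 + s'.1) ⊓ W = (φ r + φ r') ⊓ W
    rw [hsv, hsv']
  exact ⟨φ, hbound, hmono, hinj, hsurjφ, hφ1, hφY, hcompat⟩


lemma negB {w : ℝ} (hw : 2 < w) :
    ¬ RingLikeIso (TT 1 2 zero_le_one) (TT 1 w zero_le_one) := by
  intro h
  obtain ⟨φ, hbound, hmono, hinj, hsurj, hφ1, hφY, hcompat⟩ :=
    extract_phi (by norm_num) (by linarith) h
  have e1 := hcompat 1 1 le_rfl (by norm_num) le_rfl (by norm_num)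
  rw [hφ1, show min (1+1:ℝ) 2 = 2 by norm_num, hφY,
    show min (1+1:ℝ) w = 2 by rw [min_eq_left (by linarith : (1+1:ℝ) ≤ w)]; norm_num] at e1
  linarith

lemma negC {w : ℝ} (hw : 3 ≤ w) :
    ¬ RingLikeIso (TT 1 2.5 zero_le_one) (TT 1 w zero_le_one) := by
  intro h
  obtain ⟨φ, hbound, hmono, hinj, hsurj, hφ1, hφY, hcompat⟩ :=
    extract_phi (by norm_num) (by linarith) h
  have e1 := hcompat 1 1 le_rfl (by norm_num) le_rfl (by norm_num)
  rw [hφ1, show min (1+1:ℝ) 2.5 = 2 by norm_num,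
    show min (1+1:ℝ) w = 2 by rw [min_eq_left (by linarith : (1+1:ℝ) ≤ w)]; norm_num] at e1
  have e2 := hcompat 1 1.5 le_rfl (by norm_num) (by norm_num) (by norm_num)
  rw [hφ1, show min (1+1.5:ℝ) 2.5 = 2.5 by norm_num, hφY] at e2
  have hmono15 := hmono 1.5 2 (by norm_num) (by norm_num) (by norm_num)
  rw [e1] at hmono15
  have hge : w ≤ 1 + φ 1.5 := by
    by_contra hcon
    push_neg at hcon
    rw [min_eq_left hcon.le] at e2
    linarith
  have heq : φ 1.5 = 2 := le_antisymm hmono15 (by linarith)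
  have := hinj 1.5 2 (by norm_num) (by norm_num) (by norm_num) (by norm_num)
    (by rw [heq, e1])
  norm_num at this

lemma one_div_pow_lt_one (n : ℕ) : (1:ℝ) / 2^(n+1) < 1 := by
  rw [div_lt_one (by positivity)]
  exact one_lt_pow₀ one_lt_two (Nat.succ_ne_zero n)

lemma cauchy_interval (h : ℝ → ℝ) (h0 : h 0 = 0)
    (hadd : ∀ u v : ℝ, 0 ≤ u → 0 ≤ v → u + v < 1 → h (u+v) = h u + h v)
    (hmono : ∀ u v : ℝ, 0 ≤ u → u ≤ v → v < 1 → h u ≤ h v) :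
    ∀ u : ℝ, 0 ≤ u → u < 1 → h u = (2 * h (1/2)) * u := by
  set c : ℝ := 2 * h (1/2) with hc
  have hc0 : 0 ≤ c := by
    have := hmono 0 (1/2) le_rfl (by norm_num) (by norm_num)
    rw [h0] at this; positivity
  have hpow : ∀ n : ℕ, h (1 / 2^(n+1)) = c / 2^(n+1) := by
    intro n
    induction n with
    | zero => rw [hc]; norm_num
    | succ n ih =>
      have e : (1:ℝ)/2^(n+1) = 1/2^(n+2) + 1/2^(n+2) := by ring
      have key : h (1/2^(n+1)) = 2 * h (1/2^(n+2)) := by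
        rw [e, hadd _ _ (by positivity) (by positivity)
          (by rw [← e]; exact one_div_pow_lt_one n)]
        ring
      have this2 : 2 * h (1/2^(n+2)) = c / 2^(n+1) := by rw [← key, ih]
      show h (1/2^(n+2)) = c/2^(n+2)
      have e2 : (c:ℝ)/2^(n+2) = (c/2^(n+1))/2 := by ring
      rw [e2, ← this2]
      linarith
  have hdyad : ∀ n k : ℕ, (k:ℝ)/2^(n+1) < 1 → h ((k:ℝ)/2^(n+1)) = c * ((k:ℝ)/2^(n+1)) := by
    intro n k
    induction k with
    | zero => intro _; norm_num [h0]
    | succ k ih =>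
      intro hk1
      push_cast at hk1 ⊢
      have hkk : (k:ℝ)/2^(n+1) < 1 := by
        apply lt_of_le_of_lt _ hk1
        apply div_le_div_of_nonneg_right _ (by positivity)
        · linarith
      have hval : h ((k:ℝ)/2^(n+1) + 1/2^(n+1)) = h ((k:ℝ)/2^(n+1)) + h (1/2^(n+1)) := by
        apply hadd _ _ (by positivity) (by positivity)
        rw [← add_div]; exact hk1
      rw [show ((k:ℝ)+1)/2^(n+1) = (k:ℝ)/2^(n+1) + 1/2^(n+1) by ring, hval, ih hkk, hpow n]
      field_simp
  intro u hu0 hu1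
  have key : ∀ ε : ℝ, 0 < ε → h u ≤ c*u + c*ε ∧ c*u - c*ε ≤ h u := by
    intro ε hε
    obtain ⟨n, hn⟩ := pow_unbounded_of_one_lt (max (1/ε) (1/(1-u))) (one_lt_two (α := ℝ))
    set m := n + 1 with hm
    have h2m : (0:ℝ) < 2^m := by positivity
    have hnε : (1:ℝ)/2^m < ε := by
      rw [div_lt_iff₀ h2m]
      have h1 : 1/ε < 2^m := by
        calc (1:ℝ)/ε ≤ max (1/ε) (1/(1-u)) := le_max_left _ _
          _ < 2^n := hn
          _ ≤ 2^m := by apply pow_le_pow_right₀ (by norm_num) (by omega)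
      rw [div_lt_iff₀ hε] at h1
      linarith
    have hnu : (1:ℝ)/2^m < 1 - u := by
      rw [div_lt_iff₀ h2m]
      have h1 : 1/(1-u) < 2^m := by
        calc (1:ℝ)/(1-u) ≤ max (1/ε) (1/(1-u)) := le_max_right _ _
          _ < 2^n := hn
          _ ≤ 2^m := by apply pow_le_pow_right₀ (by norm_num) (by omega)
      rw [div_lt_iff₀ (by linarith)] at h1
      linarith
    set k : ℕ := ⌊u * 2^m⌋₊ with hk
    have hk1 : (k:ℝ) ≤ u * 2^m := Nat.floor_le (by positivity)
    have hk2 : u * 2^m < (k:ℝ) + 1 := Nat.lt_floor_add_one _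
    have hq1 : (k:ℝ)/2^m ≤ u := by rw [div_le_iff₀ h2m]; linarith
    have hq2 : u < ((k:ℝ)+1)/2^m := by rw [lt_div_iff₀ h2m]; linarith
    have hq2lt : ((k:ℝ)+1)/2^m < 1 := by
      rw [div_lt_iff₀ h2m]
      have h1 : (1:ℝ) < (1-u) * 2^m := by rw [← div_lt_iff₀ h2m]; exact hnu
      nlinarith
    have hq1lt : (k:ℝ)/2^m < 1 := lt_of_le_of_lt hq1 hu1
    have e1 := hdyad n k hq1lt
    have e2 : h (((k:ℝ)+1)/2^m) = c * (((k:ℝ)+1)/2^m) := by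
      have := hdyad n (k+1) (by push_cast; exact hq2lt)
      push_cast at this; exact this
    have m1 := hmono _ u (by positivity) hq1 hu1
    have m2 := hmono u _ hu0 hq2.le hq2lt
    rw [e1] at m1; rw [e2] at m2
    have hsplit : ((k:ℝ)+1)/2^m = (k:ℝ)/2^m + 1/2^m := by ring
    constructor
    · calc h u ≤ c * (((k:ℝ)+1)/2^m) := m2
        _ = c * ((k:ℝ)/2^m) + c * (1/2^m) := by ring
        _ ≤ c * u + c * ε := by
            apply add_le_add
            · exact mul_le_mul_of_nonneg_left hq1 hc0
            · exact mul_le_mul_of_nonneg_left hnε.le hc0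
    · have hu_le : u - ε ≤ (k:ℝ)/2^m := by rw [hsplit] at hq2; linarith
      have : c * (u - ε) ≤ c * ((k:ℝ)/2^m) := mul_le_mul_of_nonneg_left hu_le hc0
      nlinarith
  apply le_antisymm
  · apply le_of_forall_pos_le_add
    intro ε hε
    rcases eq_or_lt_of_le hc0 with hc' | hc'
    · have := (key 1 one_pos).1; rw [← hc'] at this ⊢; simp at this ⊢; linarith
    · have := (key (ε/c) (by positivity)).1
      calc h u ≤ c*u + c*(ε/c) := this
        _ = c*u + ε := by field_simp
  · rw [← sub_nonneg]
    by_contra hcon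
    push_neg at hcon
    rcases eq_or_lt_of_le hc0 with hc' | hc'
    · have := (key 1 one_pos).2
      rw [← hc'] at this hcon
      simp at this hcon
      linarith
    · rw [sub_neg] at hcon
      have := (key ((c*u - h u)/(2*c)) (div_pos (by linarith) (by linarith))).2
      have hX : c * ((c*u - h u)/(2*c)) = (c*u - h u)/2 := by field_simp
      nlinarith

lemma negD {y z : ℝ} (hy : 3 ≤ y) (hyz : y < z) :
    ¬ RingLikeIso (TT 1 y zero_le_one) (TT 1 z zero_le_one) := by
  intro hiso
  have hy1 : (1:ℝ) < y := by linarith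
  have hz1 : (1:ℝ) < z := by linarith
  obtain ⟨φ, hbound, hmono, hinj, hsurj, hφ1, hφY, hcompat⟩ := extract_phi hy1 hz1 hiso
  have haddφ : ∀ a b : ℝ, 1 ≤ a → 1 ≤ b → a + b < y → φ (a+b) = φ a + φ b := by
    intro a b ha hb hab
    have ha2 : a ≤ y := by linarith
    have hb2 : b ≤ y := by linarith
    have key := hcompat a b ha ha2 hb hb2
    rw [min_eq_left hab.le] at key
    rcases le_or_gt z (φ a + φ b) with hge | hlt
    · exfalso
      rw [min_eq_right hge, ← hφY] at key
      have := hinj (a+b) y (by linarith) (by linarith) (by linarith) le_rfl key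
      linarith
    · rw [min_eq_left hlt.le] at key; exact key
  have hφ2 : φ 2 = 2 := by
    have := haddφ 1 1 le_rfl le_rfl (by linarith)
    rw [hφ1] at this
    norm_num at this
    linarith
  set h : ℝ → ℝ := fun x => φ (1 + x) - 1 with hh
  have h0 : h 0 = 0 := by simp [hh, hφ1]
  have haddh : ∀ u v : ℝ, 0 ≤ u → 0 ≤ v → u + v < 1 → h (u+v) = h u + h v := by
    intro u v hu hv huv
    have e1 : φ ((1+u) + (1+v)) = φ (1+u) + φ (1+v) :=
      haddφ (1+u) (1+v) (by linarith) (by linarith) (by linarith)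
    have e2 : φ ((1+(u+v)) + 1) = φ (1+(u+v)) + φ 1 :=
      haddφ (1+(u+v)) 1 (by linarith) le_rfl (by linarith)
    rw [hφ1] at e2
    have e3 : (1+u) + (1+v) = (1+(u+v)) + 1 := by ring
    rw [e3, e2] at e1
    simp only [hh]
    linarith
  have hmonoh : ∀ u v : ℝ, 0 ≤ u → u ≤ v → v < 1 → h u ≤ h v := by
    intro u v hu huv hv
    have := hmono (1+u) (1+v) (by linarith) (by linarith) (by linarith)
    simp only [hh]; linarith
  have hlin := cauchy_interval h h0 haddh hmonoh
  set c : ℝ := 2 * h (1/2) with hc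
  have hφform : ∀ x : ℝ, 0 ≤ x → x < 1 → φ (1+x) = 1 + c*x := by
    intro x h1 h2
    have := hlin x h1 h2
    simp only [hh] at this
    linarith
  have hc0 : 0 ≤ c := by
    have := hmonoh 0 (1/2) le_rfl (by norm_num) (by norm_num)
    rw [h0] at this
    simp only [hc]; linarith
  rcases lt_trichotomy c 1 with hcl | hce | hcg
  · -- c < 1
    obtain ⟨r, ⟨hr1, hr2⟩, hφr⟩ := hsurj ((3+c)/2) (by linarith) (by linarith)
    rcases lt_or_ge r 2 with hrlt | hrge
    · have e := hφform (r-1) (by linarith) (by linarith)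
      rw [show 1 + (r-1) = r by ring] at e
      have hcx : c * (r-1) ≤ c := by nlinarith
      rw [hφr] at e
      linarith
    · have := hmono 2 r (by norm_num) hrge hr2
      rw [hφ2, hφr] at this
      linarith
  · -- c = 1 : φ = id on [1, y)
    have hid : ∀ n : ℕ, ∀ r : ℝ, 1 ≤ r → r < y → r ≤ 2 + n → φ r = r := by
      intro n
      induction n with
      | zero =>
        intro r h1 h2 h3
        push_cast at h3
        norm_num at h3
        rcases lt_or_eq_of_le h3 with h4 | h4
        · have e := hφform (r-1) (by linarith) (by linarith)
          rw [show 1 + (r-1) = r by ring, hce] at e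
          linarith
        · rw [h4, hφ2]
      | succ n ih =>
        intro r h1 h2 h3
        push_cast at h3
        rcases le_or_gt r (2 + n) with h4 | h4
        · exact ih r h1 h2 (by push_cast; linarith)
        · have hn0 : (0:ℝ) ≤ (n:ℝ) := Nat.cast_nonneg n
          have e := haddφ (r-1) 1 (by linarith) le_rfl (by linarith)
          rw [show r - 1 + 1 = r by ring, hφ1] at e
          have := ih (r-1) (by linarith) (by linarith) (by push_cast; linarith)
          rw [this] at e
          linarith
    obtain ⟨r, ⟨hr1, hr2⟩, hφr⟩ := hsurj y (by linarith) (by linarith)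
    rcases lt_or_eq_of_le hr2 with hrlt | hreq
    · obtain ⟨n, hn⟩ := exists_nat_ge r
      have := hid n r hr1 hrlt (by push_cast; linarith)
      rw [hφr] at this
      linarith
    · rw [hreq, hφY] at hφr
      linarith
  · -- c > 1
    have hc0' : (0:ℝ) < c := by linarith
    have hinv : 1/c < 1 := by rw [div_lt_one hc0']; linarith
    have e := hφform (1/c) (by positivity) hinv
    rw [mul_one_div, div_self (by linarith : c ≠ 0)] at e
    rw [show (1:ℝ)+1 = 2 by norm_num] at e
    rw [← hφ2] at e
    have := hinj (1+1/c) 2 (by linarith [one_div_nonneg.mpr hc0'.le])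
      (by linarith) (by norm_num) (by linarith) e
    have : (1:ℝ)/c = 1 := by linarith
    rw [div_eq_one_iff_eq (by linarith : c ≠ 0)] at this
    linarith

lemma negA {w : ℝ} (hw : 2 ≤ w) :
    ¬ RingLikeIso (TT 0 1 le_rfl) (TT 1 w zero_le_one) := by
  intro h
  obtain ⟨f, ⟨finj, fsurj⟩, hadd, hmul⟩ := h
  -- the element 1 in the target
  set one' : TT 1 w zero_le_one := Adj0.elem ⟨1, Or.inr ⟨le_rfl, by linarith⟩⟩ with hone
  obtain ⟨a, ha⟩ := fsurj one'
  -- a has a square root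
  have hsq : ∃ b : TT 0 1 le_rfl, b * b = a := by
    cases a with
    | zero => exact ⟨Adj0.zero, rfl⟩
    | elem e =>
      have he : 0 ≤ e.1 ∧ e.1 ≤ 1 := by
        rcases e.2 with h0 | ⟨h1, h2⟩
        · rw [h0]; norm_num
        · exact ⟨h1, h2⟩
      refine ⟨Adj0.elem ⟨e.1/2, Or.inr ⟨by linarith [he.1], by linarith [he.2]⟩⟩, ?_⟩
      show Adj0.elem (TTb.mul _ _) = Adj0.elem e
      congr 1
      unfold TTb.mul
      by_cases h0 : e.1/2 = 0
      · erw [dif_pos h0]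
        exact Subtype.ext (by show e.1/2 = e.1; linarith [h0])
      · erw [dif_neg h0, dif_neg h0]
        apply Subtype.ext
        show min (e.1/2 + e.1/2) 1 = e.1
        rw [show e.1/2 + e.1/2 = e.1 by ring, min_eq_left he.2]
  obtain ⟨b, hb⟩ := hsq
  have key : f b * f b = one' := by rw [← hmul, hb, ha]
  -- no element of the target squares to one'
  cases hfb : f b with
  | zero =>
    rw [hfb, hone] at key
    cases key
  | elem s =>
    rw [hfb] at key
    have : TTb.mul s s = ⟨1, Or.inr ⟨le_rfl, by linarith⟩⟩ := by
      injection key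
    rcases s.2 with h0 | ⟨h1, h2⟩
    · unfold TTb.mul at this; erw [dif_pos h0] at this
      have hval : s.1 = 1 := congrArg Subtype.val this
      linarith [hval, h0]
    · unfold TTb.mul at this; erw [dif_neg (show s.1 ≠ 0 by intro hc; linarith [hc, h1]),
        dif_neg (show s.1 ≠ 0 by intro hc; linarith [hc, h1])] at this
      have hval : min (s.1 + s.1) w = 1 := congrArg Subtype.val this
      have hm : (2:ℝ) ≤ min (s.1 + s.1) w := le_min (by linarith) hw
      linarith

lemma ttIso_of_G {x y x' y' : ℝ} (hx : 0 ≤ x) (hx' : 0 ≤ x')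
    (G : ℝ → ℝ) (hG0 : G 0 = 0)
    (hmaps : ∀ r, x ≤ r → r ≤ y → r ≠ 0 → x' ≤ G r ∧ G r ≤ y')
    (hne : ∀ r, x ≤ r → r ≤ y → r ≠ 0 → G r ≠ 0)
    (hmono : ∀ r r', (r = 0 ∨ (x ≤ r ∧ r ≤ y)) → (r' = 0 ∨ (x ≤ r' ∧ r' ≤ y)) →
      r ≤ r' → G r ≤ G r')
    (hinj : ∀ r r', (r = 0 ∨ (x ≤ r ∧ r ≤ y)) → (r' = 0 ∨ (x ≤ r' ∧ r' ≤ y)) →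
      G r = G r' → r = r')
    (hsurj : ∀ s, (s = 0 ∨ (x' ≤ s ∧ s ≤ y')) → ∃ r, (r = 0 ∨ (x ≤ r ∧ r ≤ y)) ∧ G r = s)
    (hmul : ∀ a b, x ≤ a → a ≤ y → x ≤ b → b ≤ y → a ≠ 0 → b ≠ 0 →
      G (min (a+b) y) = min (G a + G b) y') :
    RingLikeIso (TT x y hx) (TT x' y' hx') := by
  have hdom : ∀ r : ℝ, (r = 0 ∨ (x ≤ r ∧ r ≤ y)) → (G r = 0 ∨ (x' ≤ G r ∧ G r ≤ y')) := by
    intro r hr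
    rcases hr with rfl | ⟨h1, h2⟩
    · left; exact hG0
    · by_cases h0 : r = 0
      · left; rw [h0]; exact hG0
      · right; exact hmaps r h1 h2 h0
  set f : TT x y hx → TT x' y' hx' := fun a =>
    match a with
    | Adj0.zero => Adj0.zero
    | Adj0.elem e => Adj0.elem ⟨G e.1, hdom e.1 e.2⟩ with hf
  refine ⟨f, ⟨?_, ?_⟩, ?_, ?_⟩
  · -- injective
    intro a b hab
    cases a with
    | zero =>
      cases b with
      | zero => rfl
      | elem e => exact absurd hab (fun h => by cases h)
    | elem e =>
      cases b with
      | zero => exact absurd hab (fun h => by cases h)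
      | elem e' =>
        simp only [hf] at hab
        injection hab with hv
        have := hinj e.1 e'.1 e.2 e'.2 (congrArg Subtype.val hv)
        congr 1
        exact Subtype.ext this
  · -- surjective
    intro b
    cases b with
    | zero => exact ⟨Adj0.zero, rfl⟩
    | elem s =>
      obtain ⟨r, hr, hGr⟩ := hsurj s.1 s.2
      refine ⟨Adj0.elem ⟨r, hr⟩, ?_⟩
      simp only [hf]
      congr 1
      exact Subtype.ext hGr
  · -- addition
    intro a b
    cases a with
    | zero => rfl
    | elem e =>
      cases b with
      | zero => rfl
      | elem e' =>
        show Adj0.elem _ = Adj0.elem _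
        congr 1
        apply Subtype.ext
        show G (max e.1 e'.1) = max (G e.1) (G e'.1)
        rcases le_total e.1 e'.1 with hle | hle
        · rw [max_eq_right hle, max_eq_right (hmono e.1 e'.1 e.2 e'.2 hle)]
        · rw [max_eq_left hle, max_eq_left (hmono e'.1 e.1 e'.2 e.2 hle)]
  · -- multiplication
    intro a b
    cases a with
    | zero => rfl
    | elem e =>
      cases b with
      | zero => rfl
      | elem e' =>
        show f (Adj0.elem (TTb.mul e e')) = Adj0.elem (TTb.mul ⟨G e.1, _⟩ ⟨G e'.1, _⟩)
        by_cases h0 : e.1 = 0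
        · have hGe : G e.1 = 0 := by rw [h0]; exact hG0
          rw [TTb.mul]; erw [dif_pos h0]
          show Adj0.elem _ = Adj0.elem (TTb.mul _ _)
          unfold TTb.mul; erw [dif_pos hGe]
        · have he : x ≤ e.1 ∧ e.1 ≤ y := e.2.resolve_left h0
          have hGe : G e.1 ≠ 0 := hne e.1 he.1 he.2 h0
          by_cases h0' : e'.1 = 0
          · have hGe' : G e'.1 = 0 := by rw [h0']; exact hG0
            rw [TTb.mul]; erw [dif_neg h0, dif_pos h0']
            show Adj0.elem _ = Adj0.elem (TTb.mul _ _)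
            unfold TTb.mul; erw [dif_neg hGe, dif_pos hGe']
          · have he' : x ≤ e'.1 ∧ e'.1 ≤ y := e'.2.resolve_left h0'
            have hGe' : G e'.1 ≠ 0 := hne e'.1 he'.1 he'.2 h0'
            rw [TTb.mul]; erw [dif_neg h0, dif_neg h0']
            show Adj0.elem _ = Adj0.elem (TTb.mul _ _)
            unfold TTb.mul; erw [dif_neg hGe, dif_neg hGe']
            congr 1
            apply Subtype.ext
            show G (min (e.1 + e'.1) y) = min (G e.1 + G e'.1) y'
            exact hmul e.1 e'.1 he.1 he.2 he'.1 he'.2 h0 h0'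

lemma iso1 {y : ℝ} (hy : 0 < y) (hx : (0:ℝ) ≤ 0) :
    RingLikeIso (TT 0 y hx) (TT 0 1 le_rfl) := by
  apply ttIso_of_G (G := fun r => r / y)
  · exact zero_div y
  · intro r h1 h2 _
    exact ⟨div_nonneg h1 hy.le, (div_le_one hy).mpr h2⟩
  · intro r h1 h2 h0
    exact div_ne_zero h0 hy.ne'
  · intro r r' _ _ hle
    exact div_le_div_of_nonneg_right hle hy.le
  · intro r r' _ _ heq
    field_simp at heq
    exact heq
  · intro s hs
    have hs' : 0 ≤ s ∧ s ≤ 1 := by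
      rcases hs with rfl | h
      · norm_num
      · exact h
    refine ⟨s * y, Or.inr ⟨mul_nonneg hs'.1 hy.le, ?_⟩, ?_⟩
    · nlinarith [hs'.2]
    · field_simp
  · intro a b _ _ _ _ _ _
    rw [← min_div_div_right hy.le (a+b) y, div_self hy.ne', add_div]

lemma iso4 {x y : ℝ} (hx0 : 0 < x) (hxy : x < y) (hx : 0 ≤ x) :
    RingLikeIso (TT x y hx) (TT 1 (y/x) zero_le_one) := by
  apply ttIso_of_G (G := fun r => r / x)
  · exact zero_div x
  · intro r h1 h2 _
    exact ⟨(one_le_div hx0).mpr h1, div_le_div_of_nonneg_right h2 hx0.le⟩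
  · intro r h1 h2 h0
    exact div_ne_zero h0 hx0.ne'
  · intro r r' _ _ hle
    exact div_le_div_of_nonneg_right hle hx0.le
  · intro r r' _ _ heq
    field_simp at heq
    exact heq
  · intro s hs
    rcases hs with rfl | ⟨h1, h2⟩
    · exact ⟨0, Or.inl rfl, zero_div x⟩
    · refine ⟨s * x, Or.inr ⟨by nlinarith, ?_⟩, ?_⟩
      · calc s * x ≤ (y/x) * x := by nlinarith
          _ = y := by field_simp
      · field_simp
  · intro a b _ _ _ _ _ _
    rw [← min_div_div_right hx0.le (a+b) y, add_div]

lemma iso2 {x y : ℝ} (hx0 : 0 < x) (hxy : x < y) (h2 : y ≤ 2*x) (hx : 0 ≤ x) :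
    RingLikeIso (TT x y hx) (TT 1 2 zero_le_one) := by
  classical
  set G : ℝ → ℝ := fun r => if r = 0 then 0 else 1 + (r-x)/(y-x) with hG
  have hd : (0:ℝ) < y - x := by linarith
  have hGval : ∀ r : ℝ, x ≤ r → G r = 1 + (r-x)/(y-x) := by
    intro r h1
    simp only [hG]
    rw [if_neg (by intro h; rw [h] at h1; linarith)]
  have hGb : ∀ r : ℝ, x ≤ r → r ≤ y → 1 ≤ G r ∧ G r ≤ 2 := by
    intro r h1 h2'
    rw [hGval r h1]
    constructor
    · have : 0 ≤ (r-x)/(y-x) := div_nonneg (by linarith) hd.le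
      linarith
    · have : (r-x)/(y-x) ≤ 1 := (div_le_one hd).mpr (by linarith)
      linarith
  apply ttIso_of_G (G := G)
  · simp [hG]
  · intro r h1 h2' _
    exact hGb r h1 h2'
  · intro r h1 h2' h0
    have := (hGb r h1 h2').1
    intro hc; rw [hc] at this; linarith
  · intro r r' hr hr' hle
    rcases hr with rfl | ⟨h1, h2'⟩
    · simp only [hG, if_pos rfl]
      rcases hr' with rfl | ⟨h1', h2''⟩
      · simp
      · have := (hGb r' h1' h2'').1
        linarith
    · have h1' : x ≤ r' := le_trans h1 hle
      rw [hGval r h1, hGval r' h1']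
      have : (r-x)/(y-x) ≤ (r'-x)/(y-x) := div_le_div_of_nonneg_right (by linarith) hd.le
      linarith
  · intro r r' hr hr' heq
    rcases hr with rfl | ⟨h1, h2'⟩
    · rcases hr' with rfl | ⟨h1', h2''⟩
      · rfl
      · exfalso
        have hval := (hGb r' h1' h2'').1
        have hz : G 0 = 0 := by simp [hG]
        rw [hz] at heq
        rw [← heq] at hval
        linarith
    · rcases hr' with rfl | ⟨h1', h2''⟩
      · exfalso
        have hval := (hGb r h1 h2').1
        have hz : G 0 = 0 := by simp [hG]
        rw [hz] at heq
        rw [heq] at hval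
        linarith
      · rw [hGval r h1, hGval r' h1'] at heq
        have : (r-x)/(y-x) = (r'-x)/(y-x) := by linarith
        field_simp at this
        linarith
  · intro s hs
    rcases hs with rfl | ⟨h1, h2'⟩
    · exact ⟨0, Or.inl rfl, by simp [hG]⟩
    · refine ⟨x + (s-1)*(y-x), Or.inr ⟨by nlinarith, by nlinarith⟩, ?_⟩
      rw [hGval _ (by nlinarith)]
      field_simp
      ring
  · intro a b ha1 ha2 hb1 hb2 _ _
    have hab : y ≤ a + b := by linarith
    rw [min_eq_right hab, hGval y (by linarith)]
    have hGa := (hGb a ha1 ha2).1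
    have hGb' := (hGb b hb1 hb2).1
    rw [min_eq_right (by linarith)]
    rw [div_self hd.ne']
    norm_num

noncomputable def F3 (t : ℝ) (s : ℝ) : ℝ :=
  if s ≤ t - 1 then 1 + (s-1) * (2*(t-2))⁻¹
  else if s ≤ 2 then 1.5 + (s-(t-1)) * (2*(3-t))⁻¹
  else 2 + (s-2) * (2*(t-2))⁻¹
section F3sec
variable {t : ℝ}

lemma F3_facts (h2 : 2 < t) (h3 : t < 3) :
    0 < (2*(t-2))⁻¹ ∧ 0 < (2*(3-t))⁻¹ ∧
    (2*(t-2))⁻¹ * (t-2) = 1/2 ∧ (2*(3-t))⁻¹ * (3-t) = 1/2 := by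
  have hd : (0:ℝ) < t - 2 := by linarith
  have he : (0:ℝ) < 3 - t := by linarith
  refine ⟨by positivity, by positivity, ?_, ?_⟩
  · field_simp
  · field_simp

lemma F3_bounds (h2 : 2 < t) (h3 : t < 3) {s : ℝ} (hs1 : 1 ≤ s) (hs2 : s ≤ t) :
    1 ≤ F3 t s ∧ F3 t s ≤ 2.5 := by
  obtain ⟨hκ, hm, hκ2, hm2⟩ := F3_facts h2 h3
  rw [F3]
  split_ifs with ha hb
  · constructor
    · nlinarith
    · nlinarith
  · push_neg at ha
    constructor
    · nlinarith
    · nlinarith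
  · push_neg at ha hb
    constructor
    · nlinarith
    · nlinarith

lemma F3_smono (h2 : 2 < t) (h3 : t < 3) {u v : ℝ} (hu : 1 ≤ u) (huv : u < v) (hv : v ≤ t) :
    F3 t u < F3 t v := by
  obtain ⟨hκ, hm, hκ2, hm2⟩ := F3_facts h2 h3
  rw [F3, F3]
  split_ifs with ha hb hc hd he <;> (try push_neg at *) <;> nlinarith

lemma F3_surj (h2 : 2 < t) (h3 : t < 3) {s : ℝ} (hs1 : 1 ≤ s) (hs2 : s ≤ 2.5) :
    ∃ u : ℝ, (1 ≤ u ∧ u ≤ t) ∧ F3 t u = s := by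
  obtain ⟨hκ, hm, hκ2, hm2⟩ := F3_facts h2 h3
  have hd : (0:ℝ) < t - 2 := by linarith
  have he : (0:ℝ) < 3 - t := by linarith
  rcases le_or_gt s 1.5 with hA | hA
  · refine ⟨1 + (s-1)*(2*(t-2)), ⟨by nlinarith, by nlinarith⟩, ?_⟩
    rw [F3, if_pos (by nlinarith)]
    field_simp
    ring
  · rcases le_or_gt s 2 with hB | hB
    · refine ⟨(t-1) + (s-1.5)*(2*(3-t)), ⟨by nlinarith, by nlinarith⟩, ?_⟩
      rw [F3, if_neg (by nlinarith), if_pos (by nlinarith)]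
      field_simp
      ring
    · refine ⟨2 + (s-2)*(2*(t-2)), ⟨by nlinarith, by nlinarith⟩, ?_⟩
      rw [F3, if_neg (by nlinarith), if_neg (by nlinarith)]
      field_simp
      ring

lemma F3_mul (h2 : 2 < t) (h3 : t < 3) {u v : ℝ} (hu1 : 1 ≤ u) (hu2 : u ≤ t)
    (hv1 : 1 ≤ v) (hv2 : v ≤ t) :
    F3 t (min (u+v) t) = min (F3 t u + F3 t v) 2.5 := by
  obtain ⟨hκ, hm, hκ2, hm2⟩ := F3_facts h2 h3
  rcases lt_or_ge (u+v) t with hlt | hge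
  · -- untruncated
    have hu' : u ≤ t - 1 := by linarith
    have hv' : v ≤ t - 1 := by linarith
    have hFu : F3 t u = 1 + (u-1) * (2*(t-2))⁻¹ := by rw [F3, if_pos hu']
    have hFv : F3 t v = 1 + (v-1) * (2*(t-2))⁻¹ := by rw [F3, if_pos hv']
    have hsum : F3 t (u+v) = 2 + (u+v-2) * (2*(t-2))⁻¹ := by
      rcases le_or_gt (u+v) 2 with hA | hA
      · have huv2 : u + v = 2 := by linarith
        rw [F3, if_neg (by nlinarith), if_pos (by linarith), huv2]
        nlinarith
      · rw [F3, if_neg (by nlinarith), if_neg (by linarith)]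
    rw [min_eq_left hlt.le, hsum, hFu, hFv, min_eq_left (by nlinarith)]
    ring
  · -- truncated
    have hFt : F3 t t = 2.5 := by
      rw [F3, if_neg (by linarith), if_neg (by linarith)]
      nlinarith
    rw [min_eq_right hge, hFt, min_eq_right]
    -- show F3 t u + F3 t v ≥ 2.5
    rcases le_or_gt u (t-1) with hu' | hu'
    · rcases le_or_gt v (t-1) with hv' | hv'
      · have hFu : F3 t u = 1 + (u-1) * (2*(t-2))⁻¹ := by rw [F3, if_pos hu']
        have hFv : F3 t v = 1 + (v-1) * (2*(t-2))⁻¹ := by rw [F3, if_pos hv']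
        rw [hFu, hFv]
        nlinarith
      · -- v > t-1 : F3 v ≥ 1.5, F3 u ≥ 1
        have hFv : 1.5 ≤ F3 t v := by
          rw [F3, if_neg (by linarith)]
          split_ifs with hb
          · nlinarith
          · push_neg at hb; nlinarith
        have hFu := (F3_bounds h2 h3 hu1 hu2).1
        linarith
    · have hFu : 1.5 ≤ F3 t u := by
        rw [F3, if_neg (by linarith)]
        split_ifs with hb
        · nlinarith
        · push_neg at hb; nlinarith
      have hFv := (F3_bounds h2 h3 hv1 hv2).1
      linarith


end F3sec

lemma iso3 {x y : ℝ} (hx0 : 0 < x) (h2 : 2*x < y) (h3 : y < 3*x) (hx : 0 ≤ x) :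
    RingLikeIso (TT x y hx) (TT 1 2.5 zero_le_one) := by
  classical
  set t : ℝ := y / x with ht
  have ht2 : 2 < t := by rw [ht, lt_div_iff₀ hx0]; linarith
  have ht3 : t < 3 := by rw [ht, div_lt_iff₀ hx0]; linarith
  have hxy : x < y := by nlinarith
  set G : ℝ → ℝ := fun r => if r = 0 then 0 else F3 t (r / x) with hG
  have hGz : G 0 = 0 := by simp [hG]
  have hGval : ∀ r : ℝ, x ≤ r → G r = F3 t (r/x) := by
    intro r h1
    simp only [hG]; rw [if_neg (by intro h; rw [h] at h1; linarith)]
  have hdiv : ∀ r : ℝ, x ≤ r → r ≤ y → 1 ≤ r/x ∧ r/x ≤ t := by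
    intro r h1 h2'
    refine ⟨(one_le_div hx0).mpr h1, ?_⟩
    rw [ht]
    exact div_le_div_of_nonneg_right h2' hx0.le
  have hxi : 0 < x⁻¹ := inv_pos.mpr hx0
  have hdivlt : ∀ r r' : ℝ, r < r' → r / x < r' / x := by
    intro r r' hlt
    rw [div_eq_mul_inv, div_eq_mul_inv]
    nlinarith
  apply ttIso_of_G (G := G)
  · exact hGz
  · intro r h1 h2' _
    rw [hGval r h1]
    obtain ⟨ha, hb⟩ := hdiv r h1 h2'
    exact F3_bounds ht2 ht3 ha hb
  · intro r h1 h2' h0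
    rw [hGval r h1]
    obtain ⟨ha, hb⟩ := hdiv r h1 h2'
    have := (F3_bounds ht2 ht3 ha hb).1
    intro hc; rw [hc] at this; linarith
  · -- mono
    intro r r' hr hr' hle
    rcases hr with rfl | ⟨h1, h2'⟩
    · rw [hGz]
      rcases hr' with rfl | ⟨h1', h2''⟩
      · rw [hGz]
      · rw [hGval r' h1']
        have := (F3_bounds ht2 ht3 (hdiv r' h1' h2'').1 (hdiv r' h1' h2'').2).1
        linarith
    · have h1' : x ≤ r' := le_trans h1 hle
      have hr'' : x ≤ r' ∧ r' ≤ y := hr'.resolve_left (by intro hc; rw [hc] at h1'; linarith)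
      rw [hGval r h1, hGval r' h1']
      rcases eq_or_lt_of_le hle with rfl | hlt
      · exact le_rfl
      · exact (F3_smono ht2 ht3 (hdiv r h1 h2').1 (hdivlt r r' hlt) (hdiv r' hr''.1 hr''.2).2).le
  · -- inj
    intro r r' hr hr' heq
    rcases hr with rfl | ⟨h1, h2'⟩
    · rcases hr' with rfl | ⟨h1', h2''⟩
      · rfl
      · exfalso
        rw [hGz, hGval r' h1'] at heq
        have := (F3_bounds ht2 ht3 (hdiv r' h1' h2'').1 (hdiv r' h1' h2'').2).1
        linarith
    · rcases hr' with rfl | ⟨h1', h2''⟩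
      · exfalso
        rw [hGz, hGval r h1] at heq
        have := (F3_bounds ht2 ht3 (hdiv r h1 h2').1 (hdiv r h1 h2').2).1
        linarith
      · rw [hGval r h1, hGval r' h1'] at heq
        by_contra hne
        rcases lt_or_gt_of_ne hne with hl | hl
        · have := F3_smono ht2 ht3 (hdiv r h1 h2').1 (hdivlt r r' hl) (hdiv r' h1' h2'').2
          rw [heq] at this
          exact lt_irrefl _ this
        · have := F3_smono ht2 ht3 (hdiv r' h1' h2'').1 (hdivlt r' r hl) (hdiv r h1 h2').2
          rw [heq] at this
          exact lt_irrefl _ this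
  · -- surj
    intro s hs
    rcases hs with rfl | ⟨h1, h2'⟩
    · exact ⟨0, Or.inl rfl, hGz⟩
    · obtain ⟨u, ⟨hu1, hu2⟩, hFu⟩ := F3_surj ht2 ht3 h1 h2'
      have hub : u * x ≤ y := by
        rw [ht] at hu2
        calc u * x ≤ (y/x) * x := by nlinarith
          _ = y := by field_simp
      refine ⟨u * x, Or.inr ⟨by nlinarith, hub⟩, ?_⟩
      rw [hGval _ (by nlinarith)]
      rw [mul_div_assoc, div_self hx0.ne', mul_one]
      exact hFu
  · -- mul
    intro a b ha1 ha2 hb1 hb2 h0a h0b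
    have hmin1 : x ≤ min (a+b) y := le_min (by linarith) hxy.le
    rw [hGval _ hmin1, hGval a ha1, hGval b hb1]
    have hmd : min (a+b) y / x = min ((a+b)/x) t := by
      rw [ht, ← min_div_div_right hx0.le]
    rw [hmd, add_div]
    exact F3_mul ht2 ht3 (hdiv a ha1 ha2).1 (hdiv a ha1 ha2).2 (hdiv b hb1 hb2).1
      (hdiv b hb1 hb2).2

/-- classification of truncated tropical semirings up to isomorphism. -/
theorem stmt_14 :
    (∀ (x y : ℝ) (hx : 0 ≤ x), x < y →
      (x = 0 → RingLikeIso (TT x y hx) (TT 0 1 le_rfl)) ∧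
      (0 < x → y ≤ 2 * x → RingLikeIso (TT x y hx) (TT 1 2 zero_le_one)) ∧
      (0 < x → 2 * x < y → y < 3 * x →
        RingLikeIso (TT x y hx) (TT 1 2.5 zero_le_one)) ∧
      (0 < x → 3 * x ≤ y → RingLikeIso (TT x y hx) (TT 1 (y / x) zero_le_one))) ∧
    (¬ RingLikeIso (TT 0 1 le_rfl) (TT 1 2 zero_le_one)) ∧
    (¬ RingLikeIso (TT 0 1 le_rfl) (TT 1 2.5 zero_le_one)) ∧
    (∀ y : ℝ, 3 ≤ y → ¬ RingLikeIso (TT 0 1 le_rfl) (TT 1 y zero_le_one)) ∧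
    (¬ RingLikeIso (TT 1 2 zero_le_one) (TT 1 2.5 zero_le_one)) ∧
    (∀ y : ℝ, 3 ≤ y → ¬ RingLikeIso (TT 1 2 zero_le_one) (TT 1 y zero_le_one)) ∧
    (∀ y : ℝ, 3 ≤ y → ¬ RingLikeIso (TT 1 2.5 zero_le_one) (TT 1 y zero_le_one)) ∧
    (∀ y z : ℝ, 3 ≤ y → y < z →
      ¬ RingLikeIso (TT 1 y zero_le_one) (TT 1 z zero_le_one)) := by
  refine ⟨?_, ?_, ?_, ?_, ?_, ?_, ?_, ?_⟩
  · intro x y hx hxy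
    refine ⟨?_, ?_, ?_, ?_⟩
    · intro hx0
      subst hx0
      exact iso1 hxy hx
    · intro hx0 h2
      exact iso2 hx0 hxy h2 hx
    · intro hx0 h2 h3
      exact iso3 hx0 h2 h3 hx
    · intro hx0 h3
      exact iso4 hx0 hxy hx
  · exact negA (by norm_num)
  · exact negA (by norm_num)
  · intro y hy
    exact negA (by linarith)
  · exact negB (by norm_num)
  · intro y hy
    exact negB (by linarith)
  · intro y hy
    exact negC hy
  · intro y z hy hyz
    exact negD hy hyz
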